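/- The number of rooted planar ternary trees on leaf set [2n+1] that are 2-brushes equals ((2n−1)!!)^2, the square of the double factorial 1·3·5···(2n−1). -/

import Mathlib

/-- Rooted planar `(d+1)`-ary trees with leaves labeled by natural numbers:
every internal node has exactly `d+1` children, ordered left to right. -/
inductive PTree (d : ℕ) : Type
  | leaf : ℕ → PTree d
  | node : (Fin (d + 1) → PTree d) → PTree d

namespace PTree

/-- The list of leaf labels, read from left to right. -/
def leaves {d : ℕ} : PTree d → List ℕ
  | leaf a => [a]
  | node f => (List.ofFn fun i => leaves (f i)).flatten

/-- `m(x)`: the smallest leaf label in the tree. -/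
def minLeaf {d : ℕ} : PTree d → ℕ
  | leaf a => a
  | node f => Finset.univ.inf' Finset.univ_nonempty fun i => minLeaf (f i)

/-- A tree is a `d`-brush if at every internal node the `m`-values of the
children increase from left to right and the child with the largest `m`-value
(the rightmost one) is a leaf. -/
def IsBrush {d : ℕ} : PTree d → Prop
  | leaf _ => True
  | node f => (∀ i, IsBrush (f i)) ∧ (StrictMono fun i => minLeaf (f i)) ∧
      ∃ a, f (Fin.last d) = leaf a

/-- The tree has leaf set exactly `{1,…,m}`, each label occurring once. -/
def OnLeafSet {d : ℕ} (T : PTree d) (m : ℕ) : Prop :=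
  T.leaves.Nodup ∧ ∀ a, a ∈ T.leaves ↔ a ∈ Finset.Icc 1 m

end PTree


open Nat Finset

private lemma sum_reflect_cb (n : ℕ) :
    2 * ∑ j ∈ range (n+1), (2*j+1) * (centralBinom j * centralBinom (n-j))
      = (2*n+2) * ∑ j ∈ range (n+1), centralBinom j * centralBinom (n-j) := by
  have h := Finset.sum_range_reflect
    (fun j => (2*j+1) * (centralBinom j * centralBinom (n-j))) (n+1)
  have h2 : ∑ j ∈ range (n+1), (2*(n-j)+1) * (centralBinom (n-j) * centralBinom j)
      = ∑ j ∈ range (n+1), (2*j+1) * (centralBinom j * centralBinom (n-j)) := by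
    rw [← h]
    apply Finset.sum_congr rfl
    intro j hj
    simp only [Finset.mem_range] at hj
    have : n - (n - j) = j := by omega
    rw [Nat.add_sub_cancel, this]
  calc 2 * ∑ j ∈ range (n+1), (2*j+1) * (centralBinom j * centralBinom (n-j))
      = (∑ j ∈ range (n+1), (2*j+1) * (centralBinom j * centralBinom (n-j)))
        + ∑ j ∈ range (n+1), (2*(n-j)+1) * (centralBinom (n-j) * centralBinom j) := by
        rw [h2]; ring
    _ = ∑ j ∈ range (n+1), ((2*j+1) + (2*(n-j)+1)) * (centralBinom j * centralBinom (n-j)) := by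
        rw [← Finset.sum_add_distrib]
        apply Finset.sum_congr rfl
        intro j hj
        ring
    _ = (2*n+2) * ∑ j ∈ range (n+1), centralBinom j * centralBinom (n-j) := by
        rw [Finset.mul_sum]
        apply Finset.sum_congr rfl
        intro j hj
        simp only [Finset.mem_range] at hj
        have : (2*j+1) + (2*(n-j)+1) = 2*n+2 := by omega
        rw [this]

private lemma cb_convolution (n : ℕ) :
    ∑ j ∈ range (n+1), centralBinom j * centralBinom (n-j) = 4^n := by
  induction n with
  | zero => simp [centralBinom]
  | succ n ih =>
    have key : (n+1) * ∑ j ∈ range (n+2), centralBinom j * centralBinom (n+1-j)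
        = (n+1) * (4 * ∑ j ∈ range (n+1), centralBinom j * centralBinom (n-j)) := by
      -- (n+1) * S(n+1) = 2 * ∑ j * c j * c (n+1-j)
      have e1 : (n+1) * ∑ j ∈ range (n+2), centralBinom j * centralBinom (n+1-j)
          = 2 * ∑ j ∈ range (n+2), j * (centralBinom j * centralBinom (n+1-j)) := by
        have h := Finset.sum_range_reflect
          (fun j => j * (centralBinom j * centralBinom (n+1-j))) (n+2)
        have h2 : ∑ j ∈ range (n+2), (n+1-j) * (centralBinom (n+1-j) * centralBinom j)
            = ∑ j ∈ range (n+2), j * (centralBinom j * centralBinom (n+1-j)) := by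
          rw [← h]
          apply Finset.sum_congr rfl
          intro j hj
          simp only [Finset.mem_range] at hj
          have e : n + 1 - (n + 1 - j) = j := by omega
          have e1 : n + 2 - 1 - j = n + 1 - j := by omega
          rw [e1, e]
        calc (n+1) * ∑ j ∈ range (n+2), centralBinom j * centralBinom (n+1-j)
            = ∑ j ∈ range (n+2), (n+1) * (centralBinom j * centralBinom (n+1-j)) := by
              rw [Finset.mul_sum]
          _ = ∑ j ∈ range (n+2), (j + (n+1-j)) * (centralBinom j * centralBinom (n+1-j)) := by
              apply Finset.sum_congr rfl
              intro j hj
              simp only [Finset.mem_range] at hj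
              congr 1
              omega
          _ = (∑ j ∈ range (n+2), j * (centralBinom j * centralBinom (n+1-j)))
              + ∑ j ∈ range (n+2), (n+1-j) * (centralBinom j * centralBinom (n+1-j)) := by
              rw [← Finset.sum_add_distrib]
              apply Finset.sum_congr rfl
              intro j _
              ring
          _ = 2 * ∑ j ∈ range (n+2), j * (centralBinom j * centralBinom (n+1-j)) := by
              rw [two_mul]
              congr 1
              rw [← h2]
              apply Finset.sum_congr rfl
              intro j _
              ring
      have e2 : ∑ j ∈ range (n+2), j * (centralBinom j * centralBinom (n+1-j))
          = 2 * ∑ k ∈ range (n+1), (2*k+1) * (centralBinom k * centralBinom (n-k)) := by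
        rw [Finset.sum_range_succ']
        simp only [Nat.zero_mul, zero_mul, add_zero]
        rw [Finset.mul_sum]
        apply Finset.sum_congr rfl
        intro k hk
        have e : n + 1 - (k+1) = n - k := by omega
        rw [e]
        have h3 : (k+1) * centralBinom (k+1) = 2 * (2*k+1) * centralBinom k :=
          Nat.succ_mul_centralBinom_succ k
        calc (k+1) * (centralBinom (k+1) * centralBinom (n-k))
            = ((k+1) * centralBinom (k+1)) * centralBinom (n-k) := by ring
          _ = (2 * (2*k+1) * centralBinom k) * centralBinom (n-k) := by rw [h3]
          _ = 2 * ((2*k+1) * (centralBinom k * centralBinom (n-k))) := by ring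
      rw [e1, e2]
      have hr := sum_reflect_cb n
      calc 2 * (2 * ∑ k ∈ range (n+1), (2*k+1) * (centralBinom k * centralBinom (n-k)))
          = 2 * ((2*n+2) * ∑ j ∈ range (n+1), centralBinom j * centralBinom (n-j)) := by
            rw [hr]
        _ = (n+1) * (4 * ∑ j ∈ range (n+1), centralBinom j * centralBinom (n-j)) := by ring
    have := Nat.eq_of_mul_eq_mul_left (Nat.succ_pos n) key
    rw [this, ih]
    ring

private lemma catalan_convolution (n : ℕ) :
    2 * ∑ j ∈ range (n+1), catalan j * centralBinom (n-j) = centralBinom (n+1) := by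
  have key : ∀ j : ℕ, 4 * centralBinom j = 2 * catalan j + centralBinom (j+1) := by
    intro j
    have h1 : (j+1) * catalan j = centralBinom j := succ_mul_catalan_eq_centralBinom j
    have h2 : (j+1) * centralBinom (j+1) = 2 * (2*j+1) * centralBinom j :=
      Nat.succ_mul_centralBinom_succ j
    have h3 : (j+1) * (4 * centralBinom j) = (j+1) * (2 * catalan j + centralBinom (j+1)) := by
      rw [Nat.mul_add, h2, show (j+1) * (2 * catalan j) = 2 * ((j+1) * catalan j) by ring, h1]
      ring
    exact Nat.eq_of_mul_eq_mul_left (Nat.succ_pos j) h3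
  have lhs : ∑ j ∈ range (n+1), 4 * (centralBinom j * centralBinom (n-j)) = 4^(n+1) := by
    rw [← Finset.mul_sum, cb_convolution]
    ring
  have rhs : ∑ j ∈ range (n+1), 4 * (centralBinom j * centralBinom (n-j))
      = 2 * (∑ j ∈ range (n+1), catalan j * centralBinom (n-j))
        + ∑ j ∈ range (n+1), centralBinom (j+1) * centralBinom (n-j) := by
    rw [Finset.mul_sum, ← Finset.sum_add_distrib]
    apply Finset.sum_congr rfl
    intro j _
    rw [show 4 * (centralBinom j * centralBinom (n-j))
        = (4 * centralBinom j) * centralBinom (n-j) by ring, key j]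
    ring
  have expand : 4^(n+1) = centralBinom (n+1)
      + ∑ j ∈ range (n+1), centralBinom (j+1) * centralBinom (n-j) := by
    rw [← cb_convolution (n+1), Finset.sum_range_succ']
    simp only [Nat.sub_zero, centralBinom_zero, mul_one, one_mul]
    rw [add_comm]
    congr 1
    apply Finset.sum_congr rfl
    intro j hj
    congr 2
    omega
  omega

private lemma dfac_fact (k : ℕ) : (2*k-1)‼ * (2^k * k !) = (2*k)! := by
  cases k with
  | zero => rfl
  | succ m =>
    have h1 : (2*(m+1)) = (2*m+1) + 1 := by omega
    have h2 : (2*(m+1)-1) = 2*m+1 := by omega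
    rw [h2, h1, Nat.factorial_eq_mul_doubleFactorial (2*m+1)]
    rw [show 2*m+1+1 = 2*(m+1) from by omega, Nat.doubleFactorial_two_mul (m+1)]
    ring

private lemma cast_df (k : ℕ) : ((2*k-1)‼ : ℚ) = (2*k)! / (2^k * k !) := by
  have h := dfac_fact k
  have h2 : ((2*k-1)‼ * (2^k * k !) : ℚ) = ((2*k)! : ℚ) := by exact_mod_cast h
  field_simp at h2 ⊢
  push_cast at h2 ⊢
  linarith [h2]

private lemma cast_cb (k : ℕ) : (centralBinom k : ℚ) = (2*k)! / (k ! * k !) := by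
  rw [centralBinom, Nat.cast_choose ℚ (by omega : k ≤ 2*k),
    show 2*k-k = k from by omega]

private lemma cast_cat (j : ℕ) : (catalan j : ℚ) = centralBinom j / (j+1) := by
  have h := succ_mul_catalan_eq_centralBinom j
  have h2 : ((j+1 : ℕ) : ℚ) * catalan j = centralBinom j := by exact_mod_cast h
  push_cast at h2
  field_simp
  linarith [h2]

private lemma key_sum (n : ℕ) :
    ∑ j ∈ range (n+1),
        (2*n+2).choose (2*j+2) * ((2*j+1) * (((2*(n-j)-1)‼)^2 * ((2*j-1)‼)^2))
      = ((2*(n+1)-1)‼)^2 := by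
  have cast_goal : ((∑ j ∈ range (n+1),
      (2*n+2).choose (2*j+2) * ((2*j+1) * (((2*(n-j)-1)‼)^2 * ((2*j-1)‼)^2)) : ℕ) : ℚ)
      = (((2*(n+1)-1)‼ : ℕ)^2 : ℚ) := by
    push_cast
    have term_eq : ∀ j ∈ range (n+1),
        ((2*n+2).choose (2*j+2) : ℚ) * ((2*j+1) * (((2*(n-j)-1)‼ : ℚ)^2 * ((2*j-1)‼ : ℚ)^2))
          = (((2*n+2)! : ℚ) / (2 * 4^n)) * (catalan j * centralBinom (n-j)) := by
      intro j hj
      simp only [mem_range] at hj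
      have hjn : j ≤ n := by omega
      set i := n - j with hi
      have hij : i + j = n := by omega
      have hch : ((2*n+2).choose (2*j+2) : ℚ) = ((2*n+2)! : ℚ) / ((2*j+2)! * (2*i)!) := by
        rw [Nat.cast_choose ℚ (by omega : 2*j+2 ≤ 2*n+2),
          show 2*n+2-(2*j+2) = 2*i from by omega]
      have hf1 : ((2*j+2)! : ℚ) = (2*j+2) * ((2*j+1) * (2*j)!) := by
        have : (2*j+2)! = (2*j+2) * ((2*j+1) * (2*j)!) := by
          rw [show 2*j+2 = (2*j+1)+1 by ring, Nat.factorial_succ, Nat.factorial_succ]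
        exact_mod_cast this
      have h4n : (4:ℚ)^n = 2^(2*i) * 2^(2*j) := by
        rw [show (4:ℚ) = 2^2 from by norm_num, ← pow_mul, ← pow_add]
        congr 1
        omega
      rw [hch, hf1, cast_df i, cast_df j, cast_cat j, cast_cb j, cast_cb i, h4n]
      have hne : ∀ m : ℕ, ((m ! : ℚ)) ≠ 0 := fun m => by
        exact_mod_cast Nat.factorial_ne_zero m
      have h2i : (2:ℚ)^i ≠ 0 := by positivity
      have h2j : (2:ℚ)^j ≠ 0 := by positivity
      have h4i : (4:ℚ)^i ≠ 0 := by positivity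
      have h4j : (4:ℚ)^j ≠ 0 := by positivity
      have hj1 : ((j:ℚ)+1) ≠ 0 := by positivity
      have hj2 : (2*(j:ℚ)+2) ≠ 0 := by positivity
      have hj3 : (2*(j:ℚ)+1) ≠ 0 := by positivity
      field_simp
      ring
    rw [Finset.sum_congr rfl term_eq, ← Finset.mul_sum]
    have hconv : (∑ j ∈ range (n+1), (catalan j : ℚ) * centralBinom (n-j))
        = (centralBinom (n+1) : ℚ) / 2 := by
      have h := catalan_convolution n
      have h2 : ((2 * ∑ j ∈ range (n+1), catalan j * centralBinom (n-j) : ℕ) : ℚ)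
          = (centralBinom (n+1) : ℚ) := by exact_mod_cast h
      push_cast at h2
      linarith [h2]
    rw [hconv]
    have hdf : ((2*(n+1)-1)‼ : ℚ) = (2*(n+1))! / (2^(n+1) * (n+1)!) := cast_df (n+1)
    rw [hdf, cast_cb (n+1)]
    have hne : ∀ m : ℕ, ((m ! : ℚ)) ≠ 0 := fun m => by
      exact_mod_cast Nat.factorial_ne_zero m
    rw [show 2*(n+1) = 2*n+2 from by omega]
    have h2n : (2:ℚ)^(n+1) ≠ 0 := by positivity
    have h4n : (4:ℚ)^n = 2^(2*n) := by
      rw [show (4:ℚ) = 2^2 from by norm_num, ← pow_mul]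
    rw [h4n]
    have h2n' : (2:ℚ)^(2*n) ≠ 0 := by positivity
    field_simp
    ring
  exact_mod_cast cast_goal

namespace Scratch

open PTree

private lemma mem_leaves_node {d : ℕ} (f : Fin (d+1) → PTree d) (b : ℕ) :
    b ∈ (node f).leaves ↔ ∃ i, b ∈ (f i).leaves := by
  simp only [leaves, List.mem_flatten, List.mem_ofFn]
  constructor
  · rintro ⟨l, ⟨i, rfl⟩, hb⟩
    exact ⟨i, hb⟩
  · rintro ⟨i, hi⟩
    exact ⟨(f i).leaves, ⟨i, rfl⟩, hi⟩

private lemma leaves_node3 (f : Fin 3 → PTree 2) :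
    (node f).leaves = (f 0).leaves ++ ((f 1).leaves ++ (f 2).leaves) := by
  show (List.ofFn fun i => (f i).leaves).flatten = _
  rw [List.ofFn_succ, List.ofFn_succ, List.ofFn_succ, List.ofFn_zero]
  simp [List.flatten]

private lemma leaves_ne_nil {d : ℕ} : ∀ T : PTree d, T.leaves ≠ []
  | leaf a => by simp [leaves]
  | node f => by
    intro h
    have : (f 0).leaves = [] := by
      have h0 : ∀ b, b ∉ (node f).leaves := by rw [h]; simp
      rcases hne : (f 0).leaves with _ | ⟨b, l⟩
      · rfl
      · exact absurd ((mem_leaves_node f b).2 ⟨0, by rw [hne]; simp⟩) (h0 b)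
    exact leaves_ne_nil (f 0) this

private lemma length_leaves_pos {d : ℕ} (T : PTree d) : 0 < T.leaves.length :=
  List.length_pos_iff.mpr (leaves_ne_nil T)

private lemma length_leaves_odd : ∀ T : PTree 2, T.leaves.length % 2 = 1
  | leaf a => rfl
  | node f => by
    rw [leaves_node3]
    simp only [List.length_append]
    have h0 := length_leaves_odd (f 0)
    have h1 := length_leaves_odd (f 1)
    have h2 := length_leaves_odd (f 2)
    omega

private lemma minLeaf_mem {d : ℕ} : ∀ T : PTree d, T.minLeaf ∈ T.leaves
  | leaf a => by simp [leaves, minLeaf]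
  | node f => by
    obtain ⟨i, -, hi⟩ := Finset.exists_mem_eq_inf' (Finset.univ_nonempty)
      (fun i => (f i).minLeaf)
    have : (node f).minLeaf = (f i).minLeaf := hi
    rw [this]
    exact (mem_leaves_node f _).2 ⟨i, minLeaf_mem (f i)⟩

private lemma minLeaf_le {d : ℕ} : ∀ T : PTree d, ∀ b ∈ T.leaves, T.minLeaf ≤ b
  | leaf a => by simp [leaves, minLeaf]
  | node f => by
    intro b hb
    obtain ⟨i, hi⟩ := (mem_leaves_node f b).1 hb
    calc (node f).minLeaf ≤ (f i).minLeaf := Finset.inf'_le _ (Finset.mem_univ i)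
      _ ≤ b := minLeaf_le (f i) b hi

def Good (S : Finset ℕ) (T : PTree 2) : Prop :=
  T.leaves.Nodup ∧ T.leaves.toFinset = S ∧ T.IsBrush

private lemma good_card {S : Finset ℕ} {T : PTree 2} (h : Good S T) :
    S.card = T.leaves.length := by
  rw [← h.2.1, List.toFinset_card_of_nodup h.1]

private lemma good_card_odd {S : Finset ℕ} {T : PTree 2} (h : Good S T) :
    S.card % 2 = 1 := by
  rw [good_card h]; exact length_leaves_odd T

private lemma isEmpty_of_even {S : Finset ℕ} (h : S.card % 2 = 0) :
    IsEmpty {T : PTree 2 // Good S T} :=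
  ⟨fun ⟨T, hT⟩ => by have := good_card_odd hT; omega⟩

private lemma minLeaf_eq_min' {S : Finset ℕ} {T : PTree 2} (h : Good S T)
    (hS : S.Nonempty) : T.minLeaf = S.min' hS := by
  apply le_antisymm
  · apply Finset.le_min'
    intro b hb
    rw [← h.2.1, List.mem_toFinset] at hb
    exact minLeaf_le T b hb
  · apply Finset.min'_le
    rw [← h.2.1, List.mem_toFinset]
    exact minLeaf_mem T

private lemma strictMono_fin3 {g : Fin 3 → ℕ} (h01 : g 0 < g 1) (h12 : g 1 < g 2) :
    StrictMono g := by
  intro i j hij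
  fin_cases i <;> fin_cases j <;>
    first
      | exact absurd hij (by decide)
      | exact h01
      | exact h12
      | exact lt_trans h01 h12

end Scratch

namespace Scratch
open PTree

open scoped Classical in
private noncomputable def brushData (S : Finset ℕ) : Finset (ℕ × Finset ℕ × Finset ℕ) :=
  (S ×ˢ S.powerset ×ˢ S.powerset).filter (fun p =>
    p.2.1 ∪ p.2.2 = S.erase p.1 ∧ Disjoint p.2.1 p.2.2 ∧ p.2.2.Nonempty ∧
    (∀ b ∈ p.2.2, ∃ c ∈ p.2.1, c < b) ∧ (∃ b ∈ p.2.2, b < p.1))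

private lemma mem_brushData {S : Finset ℕ} {p : ℕ × Finset ℕ × Finset ℕ} :
    p ∈ brushData S ↔ p.1 ∈ S ∧ p.2.1 ⊆ S ∧ p.2.2 ⊆ S ∧
      p.2.1 ∪ p.2.2 = S.erase p.1 ∧ Disjoint p.2.1 p.2.2 ∧ p.2.2.Nonempty ∧
      (∀ b ∈ p.2.2, ∃ c ∈ p.2.1, c < b) ∧ (∃ b ∈ p.2.2, b < p.1) := by
  simp only [brushData, Finset.mem_filter, Finset.mem_product, Finset.mem_powerset]
  tauto

open scoped Classical in
private lemma brushData_filter_card {S : Finset ℕ} {n j : ℕ} (hS : S.card = 2*n+3)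
    (hj : j ≤ n) :
    ((brushData S).filter (fun p => p.2.2.card = 2*j+1)).card
      = (2*n+2).choose (2*j+2) * (2*j+1) := by
  have hne : S.Nonempty := Finset.card_pos.1 (by omega)
  set m := S.min' hne with hm
  have hmS : m ∈ S := S.min'_mem hne
  have key : (brushData S).filter (fun p => p.2.2.card = 2*j+1)
      = ((S.erase m).powersetCard (2*j+2)).biUnion
          (fun U => (U.filter (fun a => ∃ b ∈ U, b < a)).image
            (fun a => (a, S \ U, U.erase a))) := by
    ext p
    obtain ⟨a, S1, S2⟩ := p
    simp only [Finset.mem_filter, Finset.mem_biUnion, Finset.mem_image,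
      Finset.mem_powersetCard, mem_brushData]
    constructor
    · rintro ⟨⟨haS, hS1, hS2, hu, hd, hne2, hall, b0, hb0S2, hb0a⟩, hc2⟩
      have hne1 : S1.Nonempty := by
        obtain ⟨c, hc, -⟩ := hall b0 hb0S2
        exact ⟨c, hc⟩
      have hsub1 : S1 ⊆ S.erase a := by rw [← hu]; exact Finset.subset_union_left
      have hsub2 : S2 ⊆ S.erase a := by rw [← hu]; exact Finset.subset_union_right
      have haS2 : a ∉ S2 := fun h => (Finset.mem_erase.1 (hsub2 h)).1 rfl
      have haS1 : a ∉ S1 := fun h => (Finset.mem_erase.1 (hsub1 h)).1 rfl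
      have hm_le : ∀ x ∈ S, m ≤ x := fun x hx => S.min'_le x hx
      have hmS2 : m ∉ S2 := by
        intro h
        obtain ⟨c, hcS1, hcm⟩ := hall m h
        have := hm_le c (hS1 hcS1)
        omega
      have hma : m < a := by
        have := hm_le b0 (hS2 hb0S2)
        omega
      have hmS1 : m ∈ S1 := by
        have : m ∈ S1 ∪ S2 := by
          rw [hu, Finset.mem_erase]
          exact ⟨by omega, hmS⟩
        rcases Finset.mem_union.1 this with h | h
        · exact h
        · exact absurd h hmS2
      refine ⟨insert a S2, ⟨?_, ?_⟩, a, ?_, ?_⟩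
      · intro x hx
        rcases Finset.mem_insert.1 hx with rfl | hx
        · exact Finset.mem_erase.2 ⟨by omega, haS⟩
        · exact Finset.mem_erase.2 ⟨fun h => hmS2 (h ▸ hx), hS2 hx⟩
      · rw [Finset.card_insert_of_notMem haS2, hc2]
      · exact ⟨Finset.mem_insert_self a S2,
          b0, Finset.mem_insert_of_mem hb0S2, hb0a⟩
      · have he : (insert a S2).erase a = S2 := Finset.erase_insert haS2
        have hsd : S \ insert a S2 = S1 := by
          ext x
          simp only [Finset.mem_sdiff, Finset.mem_insert]
          constructor
          · rintro ⟨hxS, hx⟩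
            push_neg at hx
            have : x ∈ S1 ∪ S2 := by
              rw [hu, Finset.mem_erase]
              exact ⟨hx.1, hxS⟩
            rcases Finset.mem_union.1 this with h | h
            · exact h
            · exact absurd h hx.2
          · intro hx
            refine ⟨(Finset.mem_erase.1 (hsub1 hx)).2, ?_⟩
            push_neg
            exact ⟨fun h => haS1 (h ▸ hx), fun h => (Finset.disjoint_left.1 hd hx) h⟩
        rw [he, hsd]
    · rintro ⟨U, ⟨hUsub, hUcard⟩, a, ⟨haU, b0, hb0U, hb0a⟩, heq⟩
      cases heq
      have hUS : U ⊆ S := fun x hx => (Finset.mem_erase.1 (hUsub hx)).2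
      have hmU : m ∉ U := fun h => (Finset.mem_erase.1 (hUsub h)).1 rfl
      have hb0' : b0 ∈ U.erase a := Finset.mem_erase.2 ⟨by omega, hb0U⟩
      have hmSU : m ∈ S \ U := Finset.mem_sdiff.2 ⟨hmS, hmU⟩
      have hlt : ∀ x ∈ U, m < x := by
        intro x hx
        have hx' := Finset.mem_erase.1 (hUsub hx)
        have := S.min'_le x hx'.2
        omega
      refine ⟨⟨?_, ?_, ?_, ?_, ?_, ?_, ?_, ?_⟩, ?_⟩
      · exact hUS haU
      · exact Finset.sdiff_subset
      · exact fun x hx => hUS (Finset.mem_of_mem_erase hx)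
      · ext x
        simp only [Finset.mem_union, Finset.mem_sdiff, Finset.mem_erase]
        constructor
        · rintro (⟨hxS, hxU⟩ | ⟨hxa, hxU⟩)
          · exact ⟨fun h => hxU (h ▸ haU), hxS⟩
          · exact ⟨hxa, hUS hxU⟩
        · rintro ⟨hxa, hxS⟩
          by_cases hxU : x ∈ U
          · exact Or.inr ⟨hxa, hxU⟩
          · exact Or.inl ⟨hxS, hxU⟩
      · exact Finset.sdiff_disjoint.mono_right (Finset.erase_subset a U)
      · exact ⟨b0, hb0'⟩
      · exact fun b hb => ⟨m, hmSU, hlt b (Finset.mem_of_mem_erase hb)⟩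
      · exact ⟨b0, hb0', hb0a⟩
      · rw [Finset.card_erase_of_mem haU, hUcard]
        omega
  rw [key]
  rw [Finset.card_biUnion]
  · have hcard_each : ∀ U ∈ (S.erase m).powersetCard (2*j+2),
        ((U.filter (fun a => ∃ b ∈ U, b < a)).image
          (fun a => (a, S \ U, U.erase a))).card = 2*j+1 := by
      intro U hU
      obtain ⟨hUsub, hUcard⟩ := Finset.mem_powersetCard.1 hU
      have hUne : U.Nonempty := Finset.card_pos.1 (by omega)
      rw [Finset.card_image_of_injOn (fun a _ b _ h => congrArg Prod.fst h)]
      have heq : U.filter (fun a => ∃ b ∈ U, b < a) = U.erase (U.min' hUne) := by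
        ext x
        simp only [Finset.mem_filter, Finset.mem_erase]
        constructor
        · rintro ⟨hxU, b, hbU, hbx⟩
          have := U.min'_le b hbU
          exact ⟨by omega, hxU⟩
        · rintro ⟨hxne, hxU⟩
          have := U.min'_le x hxU
          exact ⟨hxU, U.min' hUne, U.min'_mem hUne, by omega⟩
      rw [heq, Finset.card_erase_of_mem (U.min'_mem hUne), hUcard]
      omega
    rw [Finset.sum_congr rfl hcard_each, Finset.sum_const, Finset.card_powersetCard,
      Finset.card_erase_of_mem hmS, hS]
    simp [mul_comm]
  · intro U hU V hV hUV
    simp only [Function.onFun]; rw [Finset.disjoint_left]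
    intro p hpU hpV
    apply hUV
    obtain ⟨a, ha, rfl⟩ := Finset.mem_image.1 hpU
    obtain ⟨b, hb, heq⟩ := Finset.mem_image.1 hpV
    rw [Finset.mem_filter] at ha hb
    simp only [Prod.mk.injEq] at heq
    obtain ⟨rfl, -, h2⟩ := heq
    calc U = insert b (U.erase b) := (Finset.insert_erase ha.1).symm
      _ = insert b (V.erase b) := by rw [← h2]
      _ = V := Finset.insert_erase hb.1

end Scratch

namespace Scratch
open PTree

private def glue (a : ℕ) (T1 T2 : PTree 2) : PTree 2 := node ![T1, T2, leaf a]

private lemma glue_eval0 (a : ℕ) (T1 T2 : PTree 2) : ![T1, T2, leaf a] 0 = T1 := rfl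
private lemma glue_eval1 (a : ℕ) (T1 T2 : PTree 2) : ![T1, T2, leaf a] 1 = T2 := rfl
private lemma glue_eval2 (a : ℕ) (T1 T2 : PTree 2) : ![T1, T2, leaf a] (Fin.last 2) = leaf a := rfl

private lemma leaves_glue (a : ℕ) (T1 T2 : PTree 2) :
    (glue a T1 T2).leaves = T1.leaves ++ (T2.leaves ++ [a]) := by
  show (node ![T1, T2, leaf a]).leaves = _
  rw [leaves_node3]
  rfl

private lemma isBrush_node_iff (f : Fin 3 → PTree 2) :
    IsBrush (node f) ↔ ((∀ i, IsBrush (f i)) ∧ (StrictMono fun i => minLeaf (f i)) ∧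
      ∃ a, f (Fin.last 2) = leaf a) := Iff.rfl

private lemma good_glue {S S1 S2 : Finset ℕ} {a : ℕ} {T1 T2 : PTree 2}
    (h1 : Good S1 T1) (h2 : Good S2 T2)
    (hu : S1 ∪ S2 = S.erase a) (hd : Disjoint S1 S2) (ha : a ∈ S)
    (hne2 : S2.Nonempty)
    (hall : ∀ b ∈ S2, ∃ c ∈ S1, c < b) (hex : ∃ b ∈ S2, b < a) :
    Good S (glue a T1 T2) := by
  obtain ⟨hnd1, hts1, hbr1⟩ := h1
  obtain ⟨hnd2, hts2, hbr2⟩ := h2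
  have hne1 : S1.Nonempty := by
    obtain ⟨b, hb, -⟩ := hex
    obtain ⟨c, hc, -⟩ := hall b hb
    exact ⟨c, hc⟩
  have hsub1 : S1 ⊆ S.erase a := by rw [← hu]; exact Finset.subset_union_left
  have hsub2 : S2 ⊆ S.erase a := by rw [← hu]; exact Finset.subset_union_right
  have haS1 : a ∉ S1 := fun h => (Finset.mem_erase.1 (hsub1 h)).1 rfl
  have haS2 : a ∉ S2 := fun h => (Finset.mem_erase.1 (hsub2 h)).1 rfl
  have hmem1 : ∀ b, b ∈ T1.leaves ↔ b ∈ S1 := fun b => by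
    rw [← hts1, List.mem_toFinset]
  have hmem2 : ∀ b, b ∈ T2.leaves ↔ b ∈ S2 := fun b => by
    rw [← hts2, List.mem_toFinset]
  refine ⟨?_, ?_, ?_⟩
  · -- Nodup
    rw [leaves_glue]
    rw [List.nodup_append]
    refine ⟨hnd1, ?_, ?_⟩
    · rw [List.nodup_append]
      refine ⟨hnd2, List.nodup_singleton a, ?_⟩
      intro x hx y hx' hxy; subst hxy
      rw [List.mem_singleton] at hx'
      subst hx'
      exact haS2 ((hmem2 x).1 hx)
    · intro x hx y hx' hxy; subst hxy
      have hxS1 : x ∈ S1 := (hmem1 x).1 hx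
      rcases List.mem_append.1 hx' with h | h
      · exact Finset.disjoint_left.1 hd hxS1 ((hmem2 x).1 h)
      · rw [List.mem_singleton] at h
        subst h
        exact haS1 hxS1
  · -- toFinset
    rw [leaves_glue]
    ext x
    simp only [List.toFinset_append, Finset.mem_union, List.mem_toFinset,
      List.toFinset_cons, List.toFinset_nil, LawfulSingleton.insert_empty_eq, Finset.mem_insert,
      Finset.notMem_empty, or_false, Finset.mem_singleton]
    rw [hmem1, hmem2]
    constructor
    · rintro (h | h | rfl)
      · exact (Finset.mem_erase.1 (hsub1 h)).2
      · exact (Finset.mem_erase.1 (hsub2 h)).2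
      · exact ha
    · intro hxS
      by_cases hxa : x = a
      · exact Or.inr (Or.inr hxa)
      · have : x ∈ S1 ∪ S2 := by rw [hu]; exact Finset.mem_erase.2 ⟨hxa, hxS⟩
        rcases Finset.mem_union.1 this with h | h
        · exact Or.inl h
        · exact Or.inr (Or.inl h)
  · -- IsBrush
    show IsBrush (node ![T1, T2, leaf a])
    rw [isBrush_node_iff]
    refine ⟨?_, ?_, a, rfl⟩
    · intro i
      fin_cases i
      · exact hbr1
      · exact hbr2
      · trivial
    · have hml1 : T1.minLeaf = S1.min' hne1 := minLeaf_eq_min' ⟨hnd1, hts1, hbr1⟩ hne1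
      have hml2 : T2.minLeaf = S2.min' hne2 := minLeaf_eq_min' ⟨hnd2, hts2, hbr2⟩ hne2
      apply strictMono_fin3
      · show minLeaf (![T1, T2, leaf a] 0) < minLeaf (![T1, T2, leaf a] 1)
        rw [glue_eval0, glue_eval1, hml1, hml2]
        obtain ⟨c, hc, hclt⟩ := hall _ (S2.min'_mem hne2)
        have := S1.min'_le c hc
        omega
      · show minLeaf (![T1, T2, leaf a] 1) < minLeaf (![T1, T2, leaf a] 2)
        rw [glue_eval1, hml2]
        show S2.min' hne2 < a
        obtain ⟨b, hb, hba⟩ := hex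
        have := S2.min'_le b hb
        omega

private lemma good_split {S : Finset ℕ} {f : Fin 3 → PTree 2} (hT : Good S (node f)) :
    ∃ a : ℕ, f (Fin.last 2) = leaf a ∧
      Good ((f 0).leaves.toFinset) (f 0) ∧ Good ((f 1).leaves.toFinset) (f 1) ∧
      ((f 0).leaves.toFinset) ∪ ((f 1).leaves.toFinset) = S.erase a ∧
      Disjoint ((f 0).leaves.toFinset) ((f 1).leaves.toFinset) ∧
      a ∈ S ∧ ((f 1).leaves.toFinset).Nonempty ∧
      (∀ b ∈ (f 1).leaves.toFinset, ∃ c ∈ (f 0).leaves.toFinset, c < b) ∧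
      (∃ b ∈ (f 1).leaves.toFinset, b < a) := by
  obtain ⟨hnd, hts, hbr⟩ := hT
  rw [isBrush_node_iff] at hbr
  obtain ⟨hbri, hsm, a, hfa⟩ := hbr
  have hf2 : f 2 = leaf a := hfa
  have hleaves : (node f).leaves = (f 0).leaves ++ ((f 1).leaves ++ [a]) := by
    rw [leaves_node3, hf2]
    rfl
  rw [hleaves] at hnd hts
  rw [List.nodup_append] at hnd
  obtain ⟨hnd0, hnd12, hdisj⟩ := hnd
  rw [List.nodup_append] at hnd12
  obtain ⟨hnd1, -, hdisj12⟩ := hnd12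
  have g0 : Good ((f 0).leaves.toFinset) (f 0) := ⟨hnd0, rfl, hbri 0⟩
  have g1 : Good ((f 1).leaves.toFinset) (f 1) := ⟨hnd1, rfl, hbri 1⟩
  have hne0 : (f 0).leaves.toFinset.Nonempty := by
    rw [List.toFinset_nonempty_iff]
    exact leaves_ne_nil (f 0)
  have hne1 : (f 1).leaves.toFinset.Nonempty := by
    rw [List.toFinset_nonempty_iff]
    exact leaves_ne_nil (f 1)
  have hml0 : (f 0).minLeaf = ((f 0).leaves.toFinset).min' hne0 := minLeaf_eq_min' g0 hne0
  have hml1 : (f 1).minLeaf = ((f 1).leaves.toFinset).min' hne1 := minLeaf_eq_min' g1 hne1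
  have h01 : (f 0).minLeaf < (f 1).minLeaf := hsm (show (0 : Fin 3) < 1 by decide)
  have h12 : (f 1).minLeaf < a := by
    have h := hsm (show (1 : Fin 3) < 2 by decide)
    change (f 1).minLeaf < (f 2).minLeaf at h
    rwa [hf2] at h
  have haS : a ∈ S := by
    rw [← hts]
    simp
  have ha0 : a ∉ (f 0).leaves := by
    intro h
    exact hdisj _ h _ (by simp) rfl
  have ha1 : a ∉ (f 1).leaves := by
    intro h
    exact hdisj12 _ h _ (by simp) rfl
  refine ⟨a, hfa, g0, g1, ?_, ?_, haS, hne1, ?_, ?_⟩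
  · -- union
    ext x
    simp only [Finset.mem_union, List.mem_toFinset, Finset.mem_erase]
    constructor
    · rintro (h | h)
      · refine ⟨fun he => ha0 (he ▸ h), ?_⟩
        rw [← hts]; simp [h]
      · refine ⟨fun he => ha1 (he ▸ h), ?_⟩
        rw [← hts]; simp [h]
    · rintro ⟨hxa, hxS⟩
      rw [← hts] at hxS
      simp only [List.toFinset_append, Finset.mem_union, List.mem_toFinset,
        List.toFinset_cons, List.toFinset_nil, LawfulSingleton.insert_empty_eq, Finset.mem_insert,
        Finset.notMem_empty, or_false, Finset.mem_singleton] at hxS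
      rcases hxS with h | h | h
      · exact Or.inl h
      · exact Or.inr h
      · exact absurd h hxa
  · -- disjoint
    rw [Finset.disjoint_left]
    intro x hx hx'
    rw [List.mem_toFinset] at hx hx'
    exact hdisj _ hx _ (by simp [hx']) rfl
  · -- ∀ b ∈ S2, ∃ c ∈ S1, c < b
    intro b hb
    refine ⟨(f 0).minLeaf, ?_, ?_⟩
    · rw [List.mem_toFinset]; exact minLeaf_mem (f 0)
    · rw [List.mem_toFinset] at hb
      have := minLeaf_le (f 1) b hb
      omega
  · -- ∃ b ∈ S2, b < a
    refine ⟨(f 1).minLeaf, ?_, h12⟩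
    rw [List.mem_toFinset]
    exact minLeaf_mem (f 1)

end Scratch

namespace Scratch
open PTree

private lemma my_card_sigma {ι : Type} [Fintype ι] (F : ι → Type) [∀ i, Finite (F i)] :
    Nat.card ((i : ι) × F i) = ∑ i, Nat.card (F i) := by
  letI : ∀ i, Fintype (F i) := fun i => Fintype.ofFinite _
  simp only [Nat.card_eq_fintype_card]
  exact Fintype.card_sigma

private lemma sum_odd_support (mm : ℕ) (h : ℕ → ℕ) (he : ∀ k, k % 2 = 0 → h k = 0) :
    ∑ k ∈ Finset.range (2*mm+1), h k = ∑ j ∈ Finset.range mm, h (2*j+1) := by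
  induction mm with
  | zero => simpa using he 0 rfl
  | succ mm ih =>
    rw [show 2*(mm+1)+1 = (2*mm+1)+1+1 by ring, Finset.sum_range_succ, Finset.sum_range_succ,
      ih, Finset.sum_range_succ, he ((2*mm+1)+1) (by omega)]
    ring

open scoped Classical in
private lemma main_count : ∀ n : ℕ, ∀ S : Finset ℕ, S.card = 2*n+1 →
    Finite {T : PTree 2 // Good S T} ∧
      Nat.card {T : PTree 2 // Good S T} = ((2*n-1)‼)^2 := by
  intro n
  induction n using Nat.strong_induction_on with
  | _ n ih =>
  intro S hScard
  obtain _ | m := n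
  · -- base case : S = {a}
    obtain ⟨a, rfl⟩ := Finset.card_eq_one.1 hScard
    have hgood : Good {a} (leaf a) := ⟨List.nodup_singleton a, by simp [leaves], trivial⟩
    haveI : Unique {T : PTree 2 // Good {a} T} := by
      refine ⟨⟨⟨leaf a, hgood⟩⟩, ?_⟩
      rintro ⟨T, hT⟩
      apply Subtype.ext
      show T = leaf a
      cases T with
      | leaf b =>
        have : ({b} : Finset ℕ) = {a} := by
          have := hT.2.1
          simpa [leaves] using this
        rw [Finset.singleton_inj] at this
        rw [this]
      | node f =>
        exfalso
        have hc := good_card hT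
        rw [leaves_node3] at hc
        simp only [List.length_append] at hc
        have h0 := length_leaves_pos (f 0)
        have h1 := length_leaves_pos (f 1)
        have h2 := length_leaves_pos (f 2)
        simp only [Finset.card_singleton] at hc
        omega
    refine ⟨inferInstance, ?_⟩
    rw [Nat.card_unique]
    norm_num
  · -- inductive step : S.card = 2*m+3
    have hScard' : S.card = 2*m+3 := by omega
    -- per-subset counting from IH
    have hcount : ∀ X : Finset ℕ, X.card ≤ 2*m+2 →
        Finite {T : PTree 2 // Good X T} ∧
          Nat.card {T : PTree 2 // Good X T}
            = (if X.card % 2 = 1 then ((2*((X.card-1)/2)-1)‼)^2 else 0) := by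
      intro X hX
      by_cases hpar : X.card % 2 = 1
      · have hXc : X.card = 2*((X.card-1)/2)+1 := by omega
        have hlt : (X.card-1)/2 < m+1 := by omega
        obtain ⟨hf, hc⟩ := ih _ hlt X hXc
        rw [if_pos hpar]
        exact ⟨hf, hc⟩
      · haveI := isEmpty_of_even (S := X) (by omega)
        rw [if_neg hpar]
        exact ⟨inferInstance, Nat.card_of_isEmpty⟩
    -- facts about brushData members
    have hfacts : ∀ p ∈ brushData S, p.2.1.card + p.2.2.card = 2*m+2 := by
      intro p hp
      rw [mem_brushData] at hp
      have := Finset.card_union_of_disjoint hp.2.2.2.2.1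
      rw [hp.2.2.2.1] at this
      rw [Finset.card_erase_of_mem hp.1, hScard'] at this
      omega
    -- the fiber family
    haveI hFib : ∀ p : ↥(brushData S),
        Finite ({T : PTree 2 // Good (↑p : ℕ × Finset ℕ × Finset ℕ).2.1 T}
          × {T : PTree 2 // Good (↑p : ℕ × Finset ℕ × Finset ℕ).2.2 T}) := by
      rintro ⟨p, hp⟩
      have h := hfacts p hp
      haveI := (hcount p.2.1 (by omega)).1
      haveI := (hcount p.2.2 (by omega)).1
      exact inferInstance
    -- the bijection
    let Φ : ((p : ↥(brushData S)) ×
        ({T : PTree 2 // Good (↑p : ℕ × Finset ℕ × Finset ℕ).2.1 T}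
          × {T : PTree 2 // Good (↑p : ℕ × Finset ℕ × Finset ℕ).2.2 T}))
        → {T : PTree 2 // Good S T} := fun x =>
      ⟨glue (↑x.1 : ℕ × Finset ℕ × Finset ℕ).1 x.2.1.1 x.2.2.1, by
        obtain ⟨⟨p, hp⟩, ⟨T1, h1⟩, ⟨T2, h2⟩⟩ := x
        rw [mem_brushData] at hp
        exact good_glue h1 h2 hp.2.2.2.1 hp.2.2.2.2.1 hp.1 hp.2.2.2.2.2.1
          hp.2.2.2.2.2.2.1 hp.2.2.2.2.2.2.2⟩
    have hbij : Function.Bijective Φ := by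
      constructor
      · rintro ⟨⟨⟨pa, pS1, pS2⟩, hp⟩, ⟨T1, h1⟩, ⟨T2, h2⟩⟩
          ⟨⟨⟨qa, qS1, qS2⟩, hq⟩, ⟨U1, g1⟩, ⟨U2, g2⟩⟩ h
        simp only [Φ, Subtype.mk.injEq] at h
        have hfun : ![T1, T2, leaf pa] = ![U1, U2, leaf qa] := by
          injection h
        obtain rfl : T1 = U1 := by
          have := congrFun hfun 0
          rwa [glue_eval0, glue_eval0] at this
        obtain rfl : T2 = U2 := by
          have := congrFun hfun 1
          rwa [glue_eval1, glue_eval1] at this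
        obtain rfl : pa = qa := by
          have := congrFun hfun (Fin.last 2)
          rw [glue_eval2, glue_eval2] at this
          injection this
        obtain rfl : pS1 = qS1 := h1.2.1.symm.trans g1.2.1
        obtain rfl : pS2 = qS2 := h2.2.1.symm.trans g2.2.1
        rfl
      · rintro ⟨T, hT⟩
        cases T with
        | leaf b =>
          exfalso
          have hc := good_card hT
          simp only [leaves, List.length_singleton] at hc
          omega
        | node f =>
          obtain ⟨a, hfa, g0, g1, hu, hd, haS, hne2, hall, hex⟩ := good_split hT
          have hsub1 : (f 0).leaves.toFinset ⊆ S := by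
            intro x hx
            have : x ∈ (f 0).leaves.toFinset ∪ (f 1).leaves.toFinset :=
              Finset.mem_union_left _ hx
            rw [hu] at this
            exact (Finset.mem_erase.1 this).2
          have hsub2 : (f 1).leaves.toFinset ⊆ S := by
            intro x hx
            have : x ∈ (f 0).leaves.toFinset ∪ (f 1).leaves.toFinset :=
              Finset.mem_union_right _ hx
            rw [hu] at this
            exact (Finset.mem_erase.1 this).2
          have hp : (a, (f 0).leaves.toFinset, (f 1).leaves.toFinset) ∈ brushData S :=
            mem_brushData.2 ⟨haS, hsub1, hsub2, hu, hd, hne2, hall, hex⟩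
          refine ⟨⟨⟨_, hp⟩, ⟨f 0, g0⟩, ⟨f 1, g1⟩⟩, ?_⟩
          apply Subtype.ext
          show glue a (f 0) (f 1) = node f
          show node ![f 0, f 1, leaf a] = node f
          congr 1
          funext i
          fin_cases i
          · rfl
          · rfl
          · exact hfa.symm
    let E := (Equiv.ofBijective Φ hbij).symm
    refine ⟨Finite.of_equiv _ E.symm, ?_⟩
    rw [Nat.card_congr E, my_card_sigma]
    rw [Finset.sum_coe_sort (brushData S)
      (fun p => Nat.card ({T : PTree 2 // Good p.2.1 T} × {T : PTree 2 // Good p.2.2 T}))]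
    -- fiberwise decomposition
    have hmaps : ∀ p ∈ brushData S, p.2.2.card ∈ Finset.range (2*(m+1)+1) := by
      intro p hp
      have := hfacts p hp
      rw [Finset.mem_range]
      omega
    rw [← Finset.sum_fiberwise_of_maps_to hmaps
      (fun p => Nat.card ({T : PTree 2 // Good p.2.1 T} × {T : PTree 2 // Good p.2.2 T}))]
    have hval : ∀ k ∈ Finset.range (2*(m+1)+1),
        (∑ p ∈ (brushData S).filter (fun p => p.2.2.card = k),
          Nat.card ({T : PTree 2 // Good p.2.1 T} × {T : PTree 2 // Good p.2.2 T}))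
        = (if k % 2 = 1 then
            (2*m+2).choose (k+1) * (k * (((2*((2*m+2-k-1)/2)-1)‼)^2 * ((2*(k/2)-1)‼)^2))
          else 0) := by
      intro k hk
      rw [Finset.mem_range] at hk
      by_cases hpar : k % 2 = 1
      · rw [if_pos hpar]
        have hterm : ∀ p ∈ (brushData S).filter (fun p => p.2.2.card = k),
            Nat.card ({T : PTree 2 // Good p.2.1 T} × {T : PTree 2 // Good p.2.2 T})
              = ((2*((2*m+2-k-1)/2)-1)‼)^2 * ((2*(k/2)-1)‼)^2 := by
          intro p hp
          rw [Finset.mem_filter] at hp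
          obtain ⟨hp, hpk⟩ := hp
          have hsum := hfacts p hp
          rw [Nat.card_prod]
          have e1 := (hcount p.2.1 (by omega)).2
          have e2 := (hcount p.2.2 (by omega)).2
          rw [e1, e2, hpk, if_pos hpar, if_pos (by omega : p.2.1.card % 2 = 1),
            show (p.2.1.card-1)/2 = (2*m+2-k-1)/2 from by omega,
            show (k-1)/2 = k/2 from by omega]
        rw [Finset.sum_congr rfl hterm, Finset.sum_const, smul_eq_mul]
        have hj2 : k / 2 ≤ m := by omega
        have hcardf := brushData_filter_card (n := m) (j := k/2) hScard' hj2
        rw [show 2*(k/2)+1 = k by omega] at hcardf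
        rw [hcardf]
        rw [show 2*(k/2)+2 = k+1 by omega]
        ring
      · rw [if_neg hpar]
        apply Finset.sum_eq_zero
        intro p hp
        rw [Finset.mem_filter] at hp
        obtain ⟨hp', hpk⟩ := hp
        haveI := isEmpty_of_even (S := p.2.2) (by omega)
        rw [Nat.card_prod,
          Nat.card_of_isEmpty (α := {T : PTree 2 // Good p.2.2 T}), mul_zero]
    rw [Finset.sum_congr rfl hval]
    rw [sum_odd_support (m+1) _ (by
      intro k hk
      rw [if_neg (by omega)])]
    have hfinal : ∀ j ∈ Finset.range (m+1),
        (if (2*j+1) % 2 = 1 then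
          (2*m+2).choose ((2*j+1)+1) * ((2*j+1) *
            (((2*((2*m+2-(2*j+1)-1)/2)-1)‼)^2 * ((2*((2*j+1)/2)-1)‼)^2))
        else 0)
        = (2*m+2).choose (2*j+2) * ((2*j+1) * (((2*(m-j)-1)‼)^2 * ((2*j-1)‼)^2)) := by
      intro j hj
      rw [Finset.mem_range] at hj
      rw [if_pos (by omega : (2*j+1) % 2 = 1),
        show (2*j+1)+1 = 2*j+2 from by omega,
        show (2*m+2-(2*j+1)-1)/2 = m-j from by omega,
        show (2*j+1)/2 = j from by omega]
    rw [Finset.sum_congr rfl hfinal]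
    have hks := key_sum m
    exact hks

end Scratch


/-- The number of rooted planar ternary trees on leaf set `[2n+1]` that are
`2`-brushes equals `((2n−1)!!)^2`. -/
theorem stmt_5 (n : ℕ) :
    Nat.card {T : PTree 2 // T.OnLeafSet (2 * n + 1) ∧ T.IsBrush} = ((2 * n - 1).doubleFactorial) ^ 2 := by
  have hequiv : ∀ T : PTree 2,
      (T.OnLeafSet (2*n+1) ∧ T.IsBrush) ↔ Scratch.Good (Finset.Icc 1 (2*n+1)) T := by
    intro T
    constructor
    · rintro ⟨⟨hnd, hmem⟩, hbr⟩
      refine ⟨hnd, ?_, hbr⟩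
      ext x
      rw [List.mem_toFinset]
      exact hmem x
    · rintro ⟨hnd, hts, hbr⟩
      refine ⟨⟨hnd, fun a => ?_⟩, hbr⟩
      rw [← hts, List.mem_toFinset]
  rw [Nat.card_congr (Equiv.subtypeEquivRight hequiv)]
  have hcard : (Finset.Icc 1 (2*n+1)).card = 2*n+1 := by
    rw [Nat.card_Icc]
    omega
  exact (Scratch.main_count n _ hcard).2
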